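/- In the instantaneous cluster-wise pseudo-SE setup, for every precoder tuple q̄, every u ∈ ℂ^S, and every ρ ∈ (0,∞)^S, the WMMSE objective satisfies J(ρ, u, q̄) ≥ Σ_{k∈S} w_k · (1 − log(1 + SLINR_k(q̄))). In particular, on any set F of precoder tuples, the infimum of J over F × ℂ^S × (0,∞)^S is bounded below by Σ_{k∈S} w_k − sup_{q̄∈F} Σ_{k∈S} w_k · log(1 + SLINR_k(q̄)). -/

import Mathlib

open scoped BigOperators

noncomputable section

variable {S S' : Type*} [Fintype S] [Fintype S'] {n : ℕ}

/-- Effective desired-signal coefficient `b_k(q̄) = ⟪g_k, q̄_k⟫`. -/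
def bCoef (g : S → EuclideanSpace ℂ (Fin n)) (q : S → EuclideanSpace ℂ (Fin n)) (k : S) : ℂ :=
  inner ℂ (g k) (q k)

/-- Total received power
`A_k(q̄) = ∑_{j∈S} |⟪g_k, q̄_j⟫|² + ∑_{j∈S'} |⟪g_j, q̄_k⟫|² + σ²`. -/
def Apow (g : S → EuclideanSpace ℂ (Fin n)) (h : S' → EuclideanSpace ℂ (Fin n)) (σ : ℝ)
    (q : S → EuclideanSpace ℂ (Fin n)) (k : S) : ℝ :=
  (∑ j, ‖(inner ℂ (g k) (q j) : ℂ)‖ ^ 2) + (∑ j, ‖(inner ℂ (h j) (q k) : ℂ)‖ ^ 2) + σ ^ 2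

/-- Interference-plus-leakage-plus-noise power `D_k(q̄) = A_k(q̄) - |b_k(q̄)|²`. -/
def Dpow (g : S → EuclideanSpace ℂ (Fin n)) (h : S' → EuclideanSpace ℂ (Fin n)) (σ : ℝ)
    (q : S → EuclideanSpace ℂ (Fin n)) (k : S) : ℝ :=
  Apow g h σ q k - ‖bCoef g q k‖ ^ 2

/-- The hybrid SLINR `SLINR_k(q̄) = |b_k(q̄)|² / D_k(q̄)`. -/
def slinr (g : S → EuclideanSpace ℂ (Fin n)) (h : S' → EuclideanSpace ℂ (Fin n)) (σ : ℝ)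
    (q : S → EuclideanSpace ℂ (Fin n)) (k : S) : ℝ :=
  ‖bCoef g q k‖ ^ 2 / Dpow g h σ q k

/-- Per-user MSE `e_k(u, q̄) = |u|² A_k(q̄) - 2 Re(conj u · b_k(q̄)) + 1`. -/
def mse (g : S → EuclideanSpace ℂ (Fin n)) (h : S' → EuclideanSpace ℂ (Fin n)) (σ : ℝ)
    (q : S → EuclideanSpace ℂ (Fin n)) (k : S) (u : ℂ) : ℝ :=
  ‖u‖ ^ 2 * Apow g h σ q k - 2 * (starRingEnd ℂ u * bCoef g q k).re + 1

/-- WMMSE objective `J(ρ, u, q̄) = ∑_{k∈S} w_k (ρ_k e_k(u_k, q̄) - log ρ_k)`. -/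
def Jobj (g : S → EuclideanSpace ℂ (Fin n)) (h : S' → EuclideanSpace ℂ (Fin n)) (σ : ℝ)
    (w : S → ℝ) (ρ : S → ℝ) (u : S → ℂ) (q : S → EuclideanSpace ℂ (Fin n)) : ℝ :=
  ∑ k, w k * (ρ k * mse g h σ q k (u k) - Real.log (ρ k))

lemma key_le {S S' : Type*} [Fintype S] [Fintype S'] {n : ℕ}
    (g : S → EuclideanSpace ℂ (Fin n)) (h : S' → EuclideanSpace ℂ (Fin n))
    (σ : ℝ) (hσ : 0 < σ) (q : S → EuclideanSpace ℂ (Fin n)) (k : S) (u : ℂ) (ρ : ℝ)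
    (hρ : 0 < ρ) :
    1 - Real.log (1 + slinr g h σ q k) ≤ ρ * mse g h σ q k u - Real.log ρ := by
  set A := Apow g h σ q k with hAdef
  set D := Dpow g h σ q k with hDdef
  set b := ‖bCoef g q k‖ with hbdef
  have hAge : b ^ 2 + σ ^ 2 ≤ A := by
    rw [hAdef, hbdef]
    unfold Apow bCoef
    have h1 : ‖(inner ℂ (g k) (q k) : ℂ)‖ ^ 2 ≤ ∑ j, ‖(inner ℂ (g k) (q j) : ℂ)‖ ^ 2 :=
      Finset.single_le_sum (f := fun j => ‖(inner ℂ (g k) (q j) : ℂ)‖ ^ 2)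
        (fun j _ => sq_nonneg _) (Finset.mem_univ k)
    have h2 : (0:ℝ) ≤ ∑ j, ‖(inner ℂ (h j) (q k) : ℂ)‖ ^ 2 :=
      Finset.sum_nonneg fun j _ => sq_nonneg _
    linarith
  have hbnn : 0 ≤ b := norm_nonneg _
  have hD : σ ^ 2 ≤ D := by
    rw [hDdef]; unfold Dpow; rw [← hAdef, ← hbdef]; linarith
  have hDpos : 0 < D := lt_of_lt_of_le (by exact pow_pos hσ 2) hD
  have hA : 0 < A := by nlinarith
  have hADb : A = D + b ^ 2 := by rw [hDdef]; unfold Dpow; rw [← hAdef, ← hbdef]; ring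
  have hre : (starRingEnd ℂ u * bCoef g q k).re ≤ ‖u‖ * b := by
    calc (starRingEnd ℂ u * bCoef g q k).re ≤ ‖starRingEnd ℂ u * bCoef g q k‖ :=
          Complex.re_le_norm _
      _ = ‖u‖ * b := by rw [norm_mul, RCLike.norm_conj]
  have hmse : D / A ≤ mse g h σ q k u := by
    rw [div_le_iff₀ hA]
    unfold mse
    rw [← hAdef]
    nlinarith [sq_nonneg (‖u‖ * A - b), mul_le_mul_of_nonneg_right hre hA.le,
      norm_nonneg u]
  have hslinr : 1 + slinr g h σ q k = A / D := by
    unfold slinr; rw [← hDdef, ← hbdef]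
    field_simp
    linarith [hADb]
  have hlog : Real.log (1 + slinr g h σ q k) = Real.log A - Real.log D := by
    rw [hslinr, Real.log_div hA.ne' hDpos.ne']
  have hmpos : 0 < D / A := div_pos hDpos hA
  have h1 : Real.log (ρ * (D / A)) ≤ ρ * (D / A) - 1 :=
    Real.log_le_sub_one_of_pos (mul_pos hρ hmpos)
  have h2 : Real.log (ρ * (D / A)) = Real.log ρ + (Real.log D - Real.log A) := by
    rw [Real.log_mul hρ.ne' hmpos.ne', Real.log_div hDpos.ne' hA.ne']
  have h3 : ρ * (D / A) ≤ ρ * mse g h σ q k u :=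
    mul_le_mul_of_nonneg_left hmse hρ.le
  rw [hlog]
  linarith

/-- In the instantaneous cluster-wise pseudo-SE setup, for every precoder tuple `q̄`,
every `u ∈ ℂ^S` and every `ρ ∈ (0,∞)^S`, the WMMSE objective satisfies
`J(ρ, u, q̄) ≥ ∑_k w_k (1 - log(1 + SLINR_k(q̄)))`. In particular, on any set `F` of
precoder tuples, the infimum of `J` over `F × ℂ^S × (0,∞)^S` is bounded below (in
extended reals) by `∑_k w_k - sup_{q̄∈F} ∑_k w_k log(1 + SLINR_k(q̄))`. -/
theorem wmmse_lower_bound (g : S → EuclideanSpace ℂ (Fin n))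
    (h : S' → EuclideanSpace ℂ (Fin n)) (σ : ℝ) (hσ : 0 < σ)
    (w : S → ℝ) (hw : ∀ k, 0 < w k) :
    (∀ q : S → EuclideanSpace ℂ (Fin n), ∀ u : S → ℂ, ∀ ρ : S → ℝ, (∀ k, 0 < ρ k) →
      (∑ k, w k * (1 - Real.log (1 + slinr g h σ q k))) ≤ Jobj g h σ w ρ u q) ∧
    ∀ F : Set (S → EuclideanSpace ℂ (Fin n)),
      (((∑ k, w k) : ℝ) : EReal) -
          sSup ((fun q => (((∑ k, w k * Real.log (1 + slinr g h σ q k)) : ℝ) : EReal)) '' F) ≤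
        sInf {x : EReal | ∃ q ∈ F, ∃ u : S → ℂ, ∃ ρ : S → ℝ,
          (∀ k, 0 < ρ k) ∧ x = ((Jobj g h σ w ρ u q : ℝ) : EReal)} := by
  have main : ∀ q : S → EuclideanSpace ℂ (Fin n), ∀ u : S → ℂ, ∀ ρ : S → ℝ,
      (∀ k, 0 < ρ k) →
      (∑ k, w k * (1 - Real.log (1 + slinr g h σ q k))) ≤ Jobj g h σ w ρ u q := by
    intro q u ρ hρ
    unfold Jobj
    refine Finset.sum_le_sum fun k _ => ?_
    exact mul_le_mul_of_nonneg_left (key_le g h σ hσ q k (u k) (ρ k) (hρ k)) (hw k).le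
  refine ⟨main, fun F => ?_⟩
  refine le_sInf fun x hx => ?_
  obtain ⟨q, hqF, u, ρ, hρ, rfl⟩ := hx
  have h1 : (((∑ k, w k * Real.log (1 + slinr g h σ q k)) : ℝ) : EReal) ≤
      sSup ((fun q => (((∑ k, w k * Real.log (1 + slinr g h σ q k)) : ℝ) : EReal)) '' F) :=
    le_sSup ⟨q, hqF, rfl⟩
  have h2 : (∑ k, w k) - (∑ k, w k * Real.log (1 + slinr g h σ q k)) ≤ Jobj g h σ w ρ u q := by
    have := main q u ρ hρ
    have heq : (∑ k, w k * (1 - Real.log (1 + slinr g h σ q k))) =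
        (∑ k, w k) - (∑ k, w k * Real.log (1 + slinr g h σ q k)) := by
      rw [← Finset.sum_sub_distrib]
      exact Finset.sum_congr rfl fun k _ => by ring
    linarith [heq ▸ this]
  calc (((∑ k, w k) : ℝ) : EReal) -
        sSup ((fun q => (((∑ k, w k * Real.log (1 + slinr g h σ q k)) : ℝ) : EReal)) '' F)
      ≤ (((∑ k, w k) : ℝ) : EReal) -
        (((∑ k, w k * Real.log (1 + slinr g h σ q k)) : ℝ) : EReal) :=
        EReal.sub_le_sub le_rfl h1
    _ = ((((∑ k, w k) - (∑ k, w k * Real.log (1 + slinr g h σ q k)) : ℝ)) : EReal) := by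
        rw [EReal.coe_sub]
    _ ≤ ((Jobj g h σ w ρ u q : ℝ) : EReal) := EReal.coe_le_coe_iff.mpr h2


end
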